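/- Let Ω ⊆ ℝⁿ be a nonempty closed convex set, F : ℝⁿ → ℝⁿ continuous and monotone on Ω, and let φ : ℝⁿ → ℝ ∪ {+∞} be convex with effective domain Ω and continuous on Ω, satisfying 0 ∈ ri(dom ∂φ − Ω). If x ∈ Ω belongs to S₀ but not to S_φ, then x ∉ S_ε for every ε > 0. -/
import Mathlib


open Set Pointwise
open scoped InnerProductSpace

/-- The (convex) subdifferential of φ (viewed as the extended function equal to φ on
Ω and +∞ outside of Ω, so that its effective domain is Ω). -/
def subdiffOn {n : ℕ} (Ω : Set (EuclideanSpace ℝ (Fin n)))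
    (φ : EuclideanSpace ℝ (Fin n) → ℝ) (x : EuclideanSpace ℝ (Fin n)) :
    Set (EuclideanSpace ℝ (Fin n)) :=
  {v | x ∈ Ω ∧ ∀ y ∈ Ω, φ x + ⟪v, y - x⟫_ℝ ≤ φ y}

/-- if x ∈ Ω belongs to S₀ but not to S_φ, then x ∉ S_ε for every
ε > 0. -/
theorem not_in_Seps_of_in_S0_not_in_Sphi {n : ℕ}
    (Ω : Set (EuclideanSpace ℝ (Fin n)))
    (hne : Ω.Nonempty) (hcl : IsClosed Ω) (hconv : Convex ℝ Ω)
    (F : EuclideanSpace ℝ (Fin n) → EuclideanSpace ℝ (Fin n))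
    (hFcont : ContinuousOn F Ω)
    (hFmono : ∀ x ∈ Ω, ∀ y ∈ Ω, 0 ≤ ⟪F x - F y, x - y⟫_ℝ)
    (φ : EuclideanSpace ℝ (Fin n) → ℝ)
    (hφconv : ConvexOn ℝ Ω φ) (hφcont : ContinuousOn φ Ω)
    -- 0 ∈ ri(dom ∂φ − Ω)
    (hri : (0 : EuclideanSpace ℝ (Fin n)) ∈
      intrinsicInterior ℝ ({x | (subdiffOn Ω φ x).Nonempty} - Ω))
    (x : EuclideanSpace ℝ (Fin n)) (hxΩ : x ∈ Ω)
    -- x ∈ S₀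
    (hxS0 : ∀ y ∈ Ω, 0 ≤ ⟪F x, y - x⟫_ℝ)
    -- x ∉ S_φ
    (hxSphi : ¬ ∃ v ∈ subdiffOn Ω φ x,
      ∀ z, (z ∈ Ω ∧ ∀ y ∈ Ω, 0 ≤ ⟪F z, y - z⟫_ℝ) → 0 ≤ ⟪v, z - x⟫_ℝ) :
    ∀ ε : ℝ, 0 < ε →
      ¬ ∃ v ∈ subdiffOn Ω φ x, ∀ z ∈ Ω, 0 ≤ ⟪F x + ε • v, z - x⟫_ℝ := by
  intro ε hε ⟨v, hv, hveps⟩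
  apply hxSphi
  refine ⟨v, hv, fun z ⟨hzΩ, hzS0⟩ => ?_⟩
  have h1 : 0 ≤ ⟪F x + ε • v, z - x⟫_ℝ := hveps z hzΩ
  rw [inner_add_left, real_inner_smul_left] at h1
  -- ⟪F x, z - x⟫ ≤ 0 via monotonicity and z being a solution
  have hmono : 0 ≤ ⟪F x - F z, x - z⟫_ℝ := hFmono x hxΩ z hzΩ
  have hz : 0 ≤ ⟪F z, x - z⟫_ℝ := hzS0 x hxΩ
  rw [inner_sub_left] at hmono
  have hFx : 0 ≤ ⟪F x, x - z⟫_ℝ := le_trans hz (by linarith)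
  have hFx' : ⟪F x, z - x⟫_ℝ ≤ 0 := by
    have : ⟪F x, z - x⟫_ℝ = -⟪F x, x - z⟫_ℝ := by
      rw [← inner_neg_right]; congr 1; abel
    linarith
  nlinarith
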